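/- A partition λ is triangular (i.e., its Ferrers diagram can be separated from its complement in ℕ² by a straight line with positive intercepts) if and only if the convex hull of its Ferrers diagram and the convex hull of its complement ℕ² \ λ are disjoint. -/

import Mathlib

open Set

/-- The positive quadrant of lattice points, representing ℕ² in the paper. -/
def posQuad : Set (ℕ × ℕ) := {c | 1 ≤ c.1 ∧ 1 ≤ c.2}

/-- Embedding of lattice cells into the real plane. -/
noncomputable def toR2 (c : ℕ × ℕ) : ℝ × ℝ := ((c.1 : ℝ), (c.2 : ℝ))

/-- A set of cells is triangular if it consists exactly of the points of ℕ²
lying weakly below some line x/r + y/s = 1 with r, s > 0. -/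
def IsTriangularSet (S : Set (ℕ × ℕ)) : Prop :=
  ∃ r s : ℝ, 0 < r ∧ 0 < s ∧
    S = {c : ℕ × ℕ | 1 ≤ c.1 ∧ 1 ≤ c.2 ∧ (c.1 : ℝ) / r + (c.2 : ℝ) / s ≤ 1}

/-- `S` is the Ferrers diagram of an integer partition. -/
def IsPartitionSet (S : Set (ℕ × ℕ)) : Prop :=
  S.Finite ∧ S ⊆ posQuad ∧
    ∀ c ∈ S, ∀ a b : ℕ, 1 ≤ a → a ≤ c.1 → 1 ≤ b → b ≤ c.2 → (a, b) ∈ S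

/-- A cell is removable if deleting it yields a triangular partition. -/
def RemovableCell (S : Set (ℕ × ℕ)) (c : ℕ × ℕ) : Prop :=
  c ∈ S ∧ IsTriangularSet (S \ {c})

/-- A cell of the complement is addable if adjoining it yields a triangular partition. -/
def AddableCell (S : Set (ℕ × ℕ)) (c : ℕ × ℕ) : Prop :=
  c ∈ posQuad \ S ∧ IsTriangularSet (insert c S)

/-- a partition is triangular iff the convex hull of its Ferrers
diagram and the convex hull of its complement in ℕ² are disjoint. -/
theorem stmt0 (S : Set (ℕ × ℕ)) (hS : IsPartitionSet S) :
    IsTriangularSet S ↔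
      convexHull ℝ (toR2 '' S) ∩ convexHull ℝ (toR2 '' (posQuad \ S)) = ∅ := by
  obtain ⟨hfin, hsub, hdown⟩ := hS
  constructor
  · rintro ⟨r, s, hr, hs, hSeq⟩
    have hlin : IsLinearMap ℝ (fun p : ℝ × ℝ => p.1 / r + p.2 / s) := by
      constructor
      · intro x y
        simp only [Prod.fst_add, Prod.snd_add]
        ring
      · intro c x
        simp only [Prod.smul_fst, Prod.smul_snd, smul_eq_mul]
        ring
    have h1 : toR2 '' S ⊆ {p : ℝ × ℝ | p.1 / r + p.2 / s ≤ 1} := by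
      rintro _ ⟨c, hc, rfl⟩
      have hc' : c ∈ {c : ℕ × ℕ | 1 ≤ c.1 ∧ 1 ≤ c.2 ∧ (c.1 : ℝ) / r + (c.2 : ℝ) / s ≤ 1} :=
        hSeq ▸ hc
      exact hc'.2.2
    have h2 : toR2 '' (posQuad \ S) ⊆ {p : ℝ × ℝ | 1 < p.1 / r + p.2 / s} := by
      rintro _ ⟨c, ⟨hcq, hcS⟩, rfl⟩
      have : ¬ (1 ≤ c.1 ∧ 1 ≤ c.2 ∧ (c.1 : ℝ) / r + (c.2 : ℝ) / s ≤ 1) := by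
        intro h; exact hcS (hSeq ▸ h)
      push_neg at this
      exact this hcq.1 hcq.2
    have hc1 := convexHull_min h1 (convex_halfSpace_le hlin 1)
    have hc2 := convexHull_min h2 (convex_halfSpace_gt hlin 1)
    ext p
    simp only [mem_inter_iff, mem_empty_iff_false, iff_false, not_and]
    intro hp1 hp2
    have h1' := hc1 hp1
    have h2' := hc2 hp2
    simp only [mem_setOf_eq] at h1' h2'
    linarith
  · intro hdisj
    rcases S.eq_empty_or_nonempty with rfl | ⟨c₀, hc₀⟩
    · refine ⟨1, 1, one_pos, one_pos, ?_⟩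
      ext c
      simp only [mem_empty_iff_false, mem_setOf_eq, false_iff, not_and, not_le]
      intro h1 h2
      have : (1:ℝ) ≤ c.1 := by exact_mod_cast h1
      have : (1:ℝ) ≤ c.2 := by exact_mod_cast h2
      norm_num
      linarith
    have h11 : (1, 1) ∈ S :=
      hdown c₀ hc₀ 1 1 le_rfl (hsub hc₀).1 le_rfl (hsub hc₀).2
    set W := hfin.toFinset.sup Prod.fst with hWdef
    set H := hfin.toFinset.sup Prod.snd with hHdef
    have hW : ∀ c ∈ S, c.1 ≤ W := fun c hc =>
      Finset.le_sup (f := Prod.fst) (hfin.mem_toFinset.mpr hc)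
    have hH : ∀ c ∈ S, c.2 ≤ H := fun c hc =>
      Finset.le_sup (f := Prod.snd) (hfin.mem_toFinset.mpr hc)
    have hW1 : 1 ≤ W := hW (1,1) h11
    have hH1 : 1 ≤ H := hH (1,1) h11
    set B : Set (ℕ × ℕ) := (posQuad \ S) ∩ Set.Iic (W+1, H+1) with hBdef
    have hBfin : B.Finite := (Set.finite_Iic _).subset inter_subset_right
    have hcompA : IsCompact (convexHull ℝ (toR2 '' S)) :=
      (hfin.image _).isCompact_convexHull ℝ
    have hcompB : IsCompact (convexHull ℝ (toR2 '' B)) :=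
      (hBfin.image _).isCompact_convexHull ℝ
    have hdisj' : Disjoint (convexHull ℝ (toR2 '' S)) (convexHull ℝ (toR2 '' B)) := by
      refine Disjoint.mono_right (convexHull_mono (image_mono (f := toR2) inter_subset_left)) ?_
      exact Set.disjoint_iff_inter_eq_empty.mpr hdisj
    obtain ⟨f, u, v, hfu, huv, hfv⟩ :=
      geometric_hahn_banach_compact_closed (convex_convexHull ℝ _) hcompA
        (convex_convexHull ℝ _) hcompB.isClosed hdisj'
    set α := f (1, 0) with hαdef
    set β := f (0, 1) with hβdef
    have hfeval : ∀ c : ℕ × ℕ, f (toR2 c) = (c.1 : ℝ) * α + (c.2 : ℝ) * β := by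
      intro c
      have : toR2 c = (c.1 : ℝ) • ((1:ℝ), (0:ℝ)) + (c.2 : ℝ) • ((0:ℝ), (1:ℝ)) := by
        simp [toR2, Prod.ext_iff]
      rw [this, map_add, map_smul, map_smul, smul_eq_mul, smul_eq_mul]
    have hS_lt : ∀ c ∈ S, (c.1 : ℝ) * α + (c.2 : ℝ) * β < u := fun c hc => by
      rw [← hfeval c]; exact hfu _ (subset_convexHull ℝ _ ⟨c, hc, rfl⟩)
    have hB_gt : ∀ c ∈ B, v < (c.1 : ℝ) * α + (c.2 : ℝ) * β := fun c hc => by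
      rw [← hfeval c]; exact hfv _ (subset_convexHull ℝ _ ⟨c, hc, rfl⟩)
    have hWB : ((W+1, 1) : ℕ × ℕ) ∈ B := by
      refine ⟨⟨⟨by omega, le_rfl⟩, fun h => by have := hW _ h; omega⟩, ?_⟩
      exact Prod.mk_le_mk.mpr ⟨le_rfl, by omega⟩
    have hHB : ((1, H+1) : ℕ × ℕ) ∈ B := by
      refine ⟨⟨⟨le_rfl, by omega⟩, fun h => by have := hH _ h; omega⟩, ?_⟩
      exact Prod.mk_le_mk.mpr ⟨by omega, le_rfl⟩
    have h11lt : α + β < u := by have := hS_lt _ h11; push_cast at this; linarith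
    have hWgt : v < ((W:ℝ)+1) * α + β := by have := hB_gt _ hWB; push_cast at this; linarith
    have hHgt : v < α + ((H:ℝ)+1) * β := by have := hB_gt _ hHB; push_cast at this; linarith
    have hWpos : (0:ℝ) < W := by exact_mod_cast hW1
    have hHpos : (0:ℝ) < H := by exact_mod_cast hH1
    have hα : 0 < α := by
      have hWα : 0 < (W:ℝ) * α := by nlinarith
      rcases mul_pos_iff.mp hWα with ⟨_, h⟩ | ⟨h, _⟩
      · exact h
      · linarith
    have hβ : 0 < β := by
      have hHβ : 0 < (H:ℝ) * β := by nlinarith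
      rcases mul_pos_iff.mp hHβ with ⟨_, h⟩ | ⟨h, _⟩
      · exact h
      · linarith
    have hu : 0 < u := by linarith
    have hv : 0 < v := by linarith
    refine ⟨v / α, v / β, div_pos hv hα, div_pos hv hβ, ?_⟩
    have key : ∀ c : ℕ × ℕ, ((c.1:ℝ) / (v / α) + (c.2:ℝ) / (v / β) ≤ 1) ↔
        ((c.1:ℝ) * α + (c.2:ℝ) * β ≤ v) := by
      intro c
      rw [div_div_eq_mul_div, div_div_eq_mul_div, ← add_div, div_le_one hv]
    ext c
    simp only [mem_setOf_eq]
    constructor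
    · intro hc
      refine ⟨(hsub hc).1, (hsub hc).2, (key c).mpr ?_⟩
      have := hS_lt c hc; linarith
    · rintro ⟨h1, h2, h3⟩
      by_contra hcS
      have hle := (key c).mp h3
      have hgt : v < (c.1 : ℝ) * α + (c.2 : ℝ) * β := by
        by_cases hcb : c.1 ≤ W + 1 ∧ c.2 ≤ H + 1
        · exact hB_gt c ⟨⟨⟨h1, h2⟩, hcS⟩, Prod.mk_le_mk.mpr hcb⟩
        · have hc2 : (1:ℝ) ≤ c.2 := by exact_mod_cast h2
          have hc1 : (1:ℝ) ≤ c.1 := by exact_mod_cast h1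
          rcases not_and_or.mp hcb with h | h
          · have : (W:ℝ) + 2 ≤ c.1 := by
              have : W + 2 ≤ c.1 := by omega
              exact_mod_cast this
            nlinarith
          · have : (H:ℝ) + 2 ≤ c.2 := by
              have : H + 2 ≤ c.2 := by omega
              exact_mod_cast this
            nlinarith
      linarith
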